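/- arXiv:1806.04256 — 3 statements merged into one kernel-verified Lean document; each statement's English description precedes it below -/
import Mathlib

section
/- Let D_p be a distribution over subsets of [n] that is δ_T-biased with marginals p, let ℓ ∈ ℕ, and let f_1,…,f_ℓ : {±1}^n → ℝ be (not necessarily distinct) functions. Then |E_{T∼D_p}[Π_{i=1}^ℓ Var[Bias_T f_i]] − E_{T∼R_p}[Π_{i=1}^ℓ Var[Bias_T f_i]]| ≤ δ_T · Π_{i=1}^ℓ Var[f_i]. -/
open Finset

/-- Uniform-distribution expectation of `f` over a finite type. -/
noncomputable def uexp {α : Type*} [Fintype α] (f : α → ℝ) : ℝ :=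
  (∑ x : α, f x) / (Fintype.card α : ℝ)

/-- Variance under the uniform distribution. -/
noncomputable def uvar {α : Type*} [Fintype α] (f : α → ℝ) : ℝ :=
  uexp (fun x => f x ^ 2) - (uexp f) ^ 2

open Classical in
/-- Real-valued indicator of a proposition. -/
noncomputable def ind (P : Prop) : ℝ := if P then 1 else 0

/-- `sel T x y` agrees with `x` on `T` and with `y` outside of `T`. -/
def sel {n : ℕ} (T : Finset (Fin n)) (x y : Fin n → Bool) : Fin n → Bool :=
  fun i => if i ∈ T then x i else y i

/-- The bias function of `f` with respect to the set `T` of live coordinates. -/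
noncomputable def biasFn {n : ℕ} (T : Finset (Fin n)) (f : (Fin n → Bool) → ℝ) :
    (Fin n → Bool) → ℝ :=
  fun x => uexp (fun y : Fin n → Bool => f (sel T x y))

/-- A layered read-once branching program of width `w` and length `n`.
`V i` is the set of vertices of layer `i`; the Boolean `true` corresponds to the
edge label `1` and `false` to the edge label `-1`; the program outputs `-1` iff it
accepts. -/
structure ROBP (w n : ℕ) where
  V : Fin (n + 1) → Finset (Fin w)
  V_nonempty : ∀ i, (V i).Nonempty
  start : Fin w
  start_mem : start ∈ V 0
  trans : Fin n → Bool → Fin w → Fin w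
  trans_mem : ∀ (i : Fin n) (b : Bool) (v : Fin w), v ∈ V i.castSucc → trans i b v ∈ V i.succ
  accept : Fin w → Bool

namespace ROBP

variable {w n : ℕ}

/-- The state reached at layer `j` when starting from state `v` at layer `i`. -/
def runTo (B : ROBP w n) (x : Fin n → Bool) (v : Fin w) (i j : ℕ) : Fin w :=
  if h : i < j ∧ i < n then runTo B x (B.trans ⟨i, h.2⟩ (x ⟨i, h.2⟩) v) (i + 1) j else v
termination_by j - i
decreasing_by omega

/-- The final state on input `x`, starting from the start vertex. -/
def run (B : ROBP w n) (x : Fin n → Bool) : Fin w := B.runTo x B.start 0 n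

/-- The `±1` value computed by `B` on `x` (`-1` means accept). -/
noncomputable def eval (B : ROBP w n) (x : Fin n → Bool) : ℝ :=
  if B.accept (B.run x) then -1 else 1

/-- Probability (over a uniformly random input) of reaching vertex `v` at layer `j`. -/
noncomputable def reachProb (B : ROBP w n) (j : ℕ) (v : Fin w) : ℝ :=
  uexp (fun x : Fin n → Bool => if B.runTo x B.start 0 j = v then (1 : ℝ) else 0)

/-- Acceptance probability starting from vertex `v` at layer `i`, on a uniform input. -/
noncomputable def beta (B : ROBP w n) (i : ℕ) (v : Fin w) : ℝ :=
  uexp (fun x : Fin n → Bool => if B.accept (B.runTo x v i n) then (1 : ℝ) else 0)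

/-- Layer `i` of edges is colliding: two distinct vertices of layer `i` have
equally-labeled edges entering the same vertex of layer `i+1`. -/
def Colliding (B : ROBP w n) (i : Fin n) : Prop :=
  ∃ (b : Bool) (u v : Fin w), u ∈ B.V i.castSucc ∧ v ∈ B.V i.castSucc ∧ u ≠ v ∧
    B.trans i b u = B.trans i b v

/-- The number of colliding layers of `B`. -/
noncomputable def collidingCount (B : ROBP w n) : ℕ :=
  Nat.card {i : Fin n // B.Colliding i}

/-- The value of `B` on `x` when all vertices of `V 0` are interpreted as start
vertices: the average of the `±1` outcomes of the corresponding computation paths. -/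
noncomputable def avgEval (B : ROBP w n) (x : Fin n → Bool) : ℝ :=
  (∑ v ∈ B.V 0, (if B.accept (B.runTo x v 0 n) then (-1 : ℝ) else 1)) / ((B.V 0).card : ℝ)

/-- The averaged value of the suffix of `B` starting at layer `t`, whose start-vertex
set is `V t`. -/
noncomputable def suffixEval (B : ROBP w n) (t : Fin (n + 1)) (x : Fin n → Bool) : ℝ :=
  (∑ v ∈ B.V t, (if B.accept (B.runTo x v (t : ℕ) n) then (-1 : ℝ) else 1)) /
    ((B.V t).card : ℝ)

/-- `B` is a `(w, ℓ, m)`-ROBP: it can be written as a concatenation of `m` consecutive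
blocks, each block boundary layer having at most `2` vertices and each block having at
most `ℓ` colliding layers. -/
def IsDecomp (B : ROBP w n) (ℓ m : ℕ) : Prop :=
  ∃ cut : Fin (m + 1) → Fin (n + 1),
    Monotone cut ∧ cut 0 = 0 ∧ cut (Fin.last m) = Fin.last n ∧
    (∀ j, (B.V (cut j)).card ≤ 2) ∧
    (∀ j : Fin m,
      Nat.card {i : Fin n //
        (cut j.castSucc : ℕ) ≤ (i : ℕ) ∧ (i : ℕ) < (cut j.succ : ℕ) ∧ B.Colliding i} ≤ ℓ)

end ROBP

/-- `G` is a pseudorandom generator that `ε`-fools the real-valued function `f`. -/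
def fools {r n : ℕ} (G : (Fin r → Bool) → (Fin n → Bool)) (f : (Fin n → Bool) → ℝ)
    (ε : ℝ) : Prop :=
  |uexp f - uexp (fun s => f (G s))| ≤ ε

/-- Expectation of `f` under the distribution with mass function `μ`. -/
noncomputable def dExp {α : Type*} [Fintype α] (μ f : α → ℝ) : ℝ :=
  ∑ x : α, μ x * f x

/-- Expectation over a `p`-random subset `T ⊆ [n]` (each coordinate kept in `T`
independently with probability `p`). -/
noncomputable def rpExpect (n : ℕ) (p : ℝ) (g : Finset (Fin n) → ℝ) : ℝ :=
  ∑ T : Finset (Fin n), p ^ T.card * (1 - p) ^ (n - T.card) * g T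

section Fourier
variable {n : ℕ}

def ee (b : Bool) : ℝ := if b then 1 else -1

def chi (S : Finset (Fin n)) (x : Fin n → Bool) : ℝ := ∏ i ∈ S, ee (x i)

lemma cardX : (Fintype.card (Fin n → Bool) : ℝ) = 2 ^ n := by
  simp [Fintype.card_fun]

lemma twopow_ne : ((2:ℝ) ^ n) ≠ 0 := by positivity

lemma chi_mul (S S' : Finset (Fin n)) (x : Fin n → Bool) :
    chi S x = ∏ i : Fin n, (if i ∈ S then ee (x i) else 1) := by
  rw [Finset.prod_ite_mem, Finset.univ_inter]; rfl

lemma sum_chi_mul (S S' : Finset (Fin n)) :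
    ∑ x : Fin n → Bool, chi S x * chi S' x = if S = S' then (2:ℝ) ^ n else 0 := by
  have h : ∀ x : Fin n → Bool, chi S x * chi S' x =
      ∏ i : Fin n, ((if i ∈ S then ee (x i) else 1) * (if i ∈ S' then ee (x i) else 1)) := by
    intro x
    rw [chi_mul S S', chi_mul S' S, ← Finset.prod_mul_distrib]
  simp only [h]
  rw [show (∑ x : Fin n → Bool, ∏ i : Fin n,
      ((if i ∈ S then ee (x i) else 1) * (if i ∈ S' then ee (x i) else 1))) =
      ∏ i : Fin n, ∑ b : Bool, ((if i ∈ S then ee b else 1) * (if i ∈ S' then ee b else 1)) from by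
    rw [Finset.prod_univ_sum]
    rw [Fintype.piFinset_univ]]
  have hfac : ∀ i : Fin n, (∑ b : Bool, ((if i ∈ S then ee b else 1) * (if i ∈ S' then ee b else 1)))
      = if (i ∈ S ↔ i ∈ S') then 2 else 0 := by
    intro i
    by_cases h1 : i ∈ S <;> by_cases h2 : i ∈ S' <;> simp [h1, h2, ee] <;> norm_num
  simp only [hfac]
  by_cases hSS : S = S'
  · subst hSS
    simp
  · rw [if_neg hSS]
    obtain ⟨i, hi⟩ : ∃ i, ¬(i ∈ S ↔ i ∈ S') := by
      by_contra hc
      push_neg at hc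
      exact hSS (Finset.ext fun i => (hc i))
    exact Finset.prod_eq_zero (Finset.mem_univ i) (if_neg hi)

lemma sum_chi_delta (x y : Fin n → Bool) :
    ∑ S : Finset (Fin n), chi S x * chi S y = if x = y then (2:ℝ) ^ n else 0 := by
  have h : ∀ S : Finset (Fin n), chi S x * chi S y = ∏ i ∈ S, (ee (x i) * ee (y i)) := by
    intro S; rw [chi, chi, ← Finset.prod_mul_distrib]
  simp only [h]
  have := Finset.prod_add (fun i : Fin n => ee (x i) * ee (y i)) (fun _ => (1:ℝ)) Finset.univ
  simp only [Finset.prod_const_one, mul_one, Finset.powerset_univ] at this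
  rw [← this]
  have hfac : ∀ i : Fin n, ee (x i) * ee (y i) + 1 = if x i = y i then 2 else 0 := by
    intro i; cases hx : x i <;> cases hy : y i <;> simp [ee] <;> norm_num
  rw [Finset.prod_congr rfl fun i _ => hfac i]
  by_cases hxy : x = y
  · subst hxy; simp
  · rw [if_neg hxy]
    obtain ⟨i, hi⟩ : ∃ i, x i ≠ y i := by
      by_contra hc; push_neg at hc; exact hxy (funext hc)
    exact Finset.prod_eq_zero (Finset.mem_univ i) (if_neg hi)

noncomputable def fhat (f : (Fin n → Bool) → ℝ) (S : Finset (Fin n)) : ℝ :=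
  uexp (fun x => f x * chi S x)

lemma inversion (f : (Fin n → Bool) → ℝ) (x : Fin n → Bool) :
    ∑ S : Finset (Fin n), fhat f S * chi S x = f x := by
  simp only [fhat, uexp, cardX, div_mul_eq_mul_div, Finset.sum_div, Finset.sum_mul]
  rw [Finset.sum_comm]
  have : ∀ y : Fin n → Bool, ∑ S : Finset (Fin n), f y * chi S y * chi S x / 2 ^ n
      = f y * (if y = x then (2:ℝ)^n else 0) / 2^n := by
    intro y
    rw [← Finset.sum_div]
    congr 1
    rw [show (fun S => f y * chi S y * chi S x) = fun S => f y * (chi S y * chi S x) from funext fun S => mul_assoc _ _ _,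
      ← Finset.mul_sum, sum_chi_delta y x]
  rw [Finset.sum_congr rfl fun y _ => this y]
  have key : ∀ y, (f y * if y = x then (2:ℝ)^n else 0) / 2^n = if y = x then f y else 0 := by
    intro y; split
    · field_simp
    · simp
  rw [Finset.sum_congr rfl fun y _ => key y, Finset.sum_ite_eq' Finset.univ x f]
  simp



lemma uexp_chi (S : Finset (Fin n)) :
    uexp (chi S) = if S = ∅ then (1:ℝ) else 0 := by
  have := sum_chi_mul S (∅ : Finset (Fin n))
  simp only [chi, Finset.prod_empty, mul_one] at this
  rw [uexp, cardX, show (∑ x : Fin n → Bool, chi S x) = ∑ x : Fin n → Bool, ∏ i ∈ S, ee (x i) from rfl, this]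
  split <;> simp [twopow_ne]

lemma orthonormal (S S' : Finset (Fin n)) :
    uexp (fun x => chi S x * chi S' x) = if S = S' then (1:ℝ) else 0 := by
  rw [uexp, cardX, sum_chi_mul]
  split <;> simp [twopow_ne]

lemma parseval (f g : (Fin n → Bool) → ℝ) :
    uexp (fun x => f x * g x) = ∑ S : Finset (Fin n), fhat f S * fhat g S := by
  have : ∀ S : Finset (Fin n), fhat f S * fhat g S
      = uexp (fun x => fhat f S * chi S x * g x) := by
    intro S
    conv_rhs => rw [uexp]
    rw [show (∑ x : Fin n → Bool, fhat f S * chi S x * g x)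
        = fhat f S * ∑ x : Fin n → Bool, chi S x * g x from by
      rw [Finset.mul_sum]; exact Finset.sum_congr rfl fun x _ => by ring]
    rw [mul_div_assoc]
    congr 1
    rw [fhat, uexp]
    congr 1
    exact Finset.sum_congr rfl fun x _ => mul_comm _ _
  rw [Finset.sum_congr rfl fun S _ => this S]
  simp only [uexp, ← Finset.sum_div]
  rw [Finset.sum_comm]
  congr 1
  refine Finset.sum_congr rfl fun x _ => ?_
  rw [← Finset.sum_mul, inversion]

lemma fhat_empty (f : (Fin n → Bool) → ℝ) : fhat f ∅ = uexp f := by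
  simp [fhat, chi]

lemma uvar_eq (f : (Fin n → Bool) → ℝ) :
    uvar f = ∑ S ∈ Finset.univ.erase (∅ : Finset (Fin n)), fhat f S ^ 2 := by
  have h1 : uexp (fun x => f x ^ 2) = ∑ S : Finset (Fin n), fhat f S ^ 2 := by
    rw [show (fun x => f x ^ 2) = fun x => f x * f x from funext fun x => sq (f x), parseval]
    exact Finset.sum_congr rfl fun S _ => (sq (fhat f S)).symm
  rw [uvar, h1, ← fhat_empty,
    ← Finset.add_sum_erase Finset.univ (fun S => fhat f S ^ 2) (Finset.mem_univ ∅)]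
  ring

lemma chi_sel (T S : Finset (Fin n)) (x y : Fin n → Bool) :
    chi S (sel T x y) = chi (S ∩ T) x * chi (S \ T) y := by
  rw [chi, chi, chi, ← Finset.prod_inter_mul_prod_diff S T]
  congr 1
  · exact Finset.prod_congr rfl fun i hi => by
      simp [sel, (Finset.mem_inter.1 hi).2]
  · exact Finset.prod_congr rfl fun i hi => by
      simp [sel, (Finset.mem_sdiff.1 hi).2]

lemma biasFn_eq (T : Finset (Fin n)) (f : (Fin n → Bool) → ℝ) (x : Fin n → Bool) :
    biasFn T f x = ∑ S : Finset (Fin n), fhat f S * (if S ⊆ T then chi S x else 0) := by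
  have hf : ∀ y, f (sel T x y) = ∑ S : Finset (Fin n), fhat f S * chi S (sel T x y) :=
    fun y => (inversion f (sel T x y)).symm
  rw [biasFn, uexp, Finset.sum_congr rfl fun y _ => hf y, Finset.sum_comm, Finset.sum_div]
  refine Finset.sum_congr rfl fun S _ => ?_
  rw [show (∑ y : Fin n → Bool, fhat f S * chi S (sel T x y))
      = fhat f S * chi (S ∩ T) x * ∑ y : Fin n → Bool, chi (S \ T) y from by
    rw [Finset.mul_sum]; exact Finset.sum_congr rfl fun y _ => by rw [chi_sel]; ring]
  have := uexp_chi (n := n) (S \ T)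
  rw [uexp, cardX] at this
  rw [mul_div_assoc, show (∑ y : Fin n → Bool, chi (S \ T) y) / (Fintype.card (Fin n → Bool) : ℝ)
      = if S \ T = ∅ then (1:ℝ) else 0 from by rw [cardX]; exact this]
  by_cases hST : S ⊆ T
  · rw [if_pos ((Finset.sdiff_eq_empty_iff_subset).2 hST), if_pos hST,
      Finset.inter_eq_left.2 hST, mul_one]
  · rw [if_neg (fun h => hST ((Finset.sdiff_eq_empty_iff_subset).1 h)), if_neg hST]
    simp

lemma fhat_biasFn (T : Finset (Fin n)) (f : (Fin n → Bool) → ℝ) (S : Finset (Fin n)) :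
    fhat (biasFn T f) S = if S ⊆ T then fhat f S else 0 := by
  rw [fhat, uexp]
  have : ∀ x, biasFn T f x * chi S x
      = ∑ S' : Finset (Fin n), fhat f S' * (if S' ⊆ T then chi S' x * chi S x else 0) := by
    intro x
    rw [biasFn_eq, Finset.sum_mul]
    exact Finset.sum_congr rfl fun S' _ => by split <;> ring
  rw [Finset.sum_congr rfl fun x _ => this x, Finset.sum_comm, Finset.sum_div]
  have h2 : ∀ S' : Finset (Fin n),
      (∑ x : Fin n → Bool, fhat f S' * (if S' ⊆ T then chi S' x * chi S x else 0))
        / (Fintype.card (Fin n → Bool) : ℝ)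
      = fhat f S' * (if S' ⊆ T then (if S' = S then (1:ℝ) else 0) else 0) := by
    intro S'
    by_cases hS' : S' ⊆ T
    · simp only [if_pos hS', ← Finset.mul_sum, mul_div_assoc]
      congr 1
      have := orthonormal S' S
      rw [uexp] at this
      exact this
    · simp [if_neg hS']
  rw [Finset.sum_congr rfl fun S' _ => h2 S']
  by_cases hST : S ⊆ T
  · rw [if_pos hST]
    rw [Finset.sum_eq_single S (fun S' _ hne => by simp [hne]) (by simp)]
    simp [hST]
  · rw [if_neg hST]
    refine Finset.sum_eq_zero fun S' _ => ?_
    by_cases h : S' = S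
    · subst h; simp [hST]
    · simp [h]

lemma ind_congr {P Q : Prop} (h : P ↔ Q) : ind P = ind Q := by
  classical
  simp only [ind]; exact if_congr h rfl rfl

@[simp] lemma ind_true {P : Prop} (h : P) : ind P = 1 := by simp [ind, h]
@[simp] lemma ind_false {P : Prop} (h : ¬ P) : ind P = 0 := by simp [ind, h]

lemma prod_ind {ι : Type*} [Fintype ι] (P : ι → Prop) :
    ∏ i : ι, ind (P i) = ind (∀ i, P i) := by
  by_cases h : ∀ i, P i
  · rw [ind_true h]
    exact Finset.prod_eq_one fun i _ => ind_true (h i)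
  · rw [ind_false h]
    push_neg at h
    obtain ⟨i, hi⟩ := h
    exact Finset.prod_eq_zero (Finset.mem_univ i) (ind_false hi)

lemma rp_ind (p : ℝ) (U : Finset (Fin n)) :
    rpExpect n p (fun T => ind (U ⊆ T)) = p ^ U.card := by
  rw [rpExpect]
  have h1 : ∀ T : Finset (Fin n), p ^ T.card * (1 - p) ^ (n - T.card) * ind (U ⊆ T)
      = if U ⊆ T then p ^ T.card * (1 - p) ^ (n - T.card) else 0 := by
    intro T
    by_cases h : U ⊆ T <;> simp [h]
  rw [Finset.sum_congr rfl fun T _ => h1 T, ← Finset.sum_filter]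
  have h2 : ∑ T ∈ Finset.univ.filter (fun T => U ⊆ T),
        p ^ T.card * (1 - p) ^ (n - T.card)
      = ∑ S ∈ Uᶜ.powerset, p ^ (S ∪ U).card * (1 - p) ^ (n - (S ∪ U).card) := by
    refine Finset.sum_bij' (fun T _ => T \ U) (fun S _ => S ∪ U) ?_ ?_ ?_ ?_ ?_
    · intro T hT
      simp only [Finset.mem_powerset]
      intro i hi
      simp only [Finset.mem_sdiff] at hi
      simp [Finset.mem_compl, hi.2]
    · intro S hS
      simp only [Finset.mem_filter, Finset.mem_univ, true_and]
      exact Finset.subset_union_right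
    · intro T hT
      simp only [Finset.mem_filter, Finset.mem_univ, true_and] at hT
      show T \ U ∪ U = T
      rw [Finset.sdiff_union_self_eq_union, Finset.union_eq_left.2 hT]
    · intro S hS
      simp only [Finset.mem_powerset] at hS
      show (S ∪ U) \ U = S
      rw [Finset.union_sdiff_right]
      exact Finset.sdiff_eq_self_of_disjoint (Finset.disjoint_left.2 fun a ha =>
        by have := hS ha; simp only [Finset.mem_compl] at this; exact this)
    · intro T hT
      simp only [Finset.mem_filter, Finset.mem_univ, true_and] at hT
      have : T \ U ∪ U = T := by
        rw [Finset.sdiff_union_self_eq_union, Finset.union_eq_left.2 hT]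
      simp only [this]
  rw [h2]
  have hcard : ∀ S ∈ Uᶜ.powerset, (S ∪ U).card = S.card + U.card ∧ S.card ≤ Uᶜ.card := by
    intro S hS
    simp only [Finset.mem_powerset] at hS
    constructor
    · rw [Finset.card_union_of_disjoint]
      exact Finset.disjoint_left.2 fun a ha => by
        have := hS ha; simp only [Finset.mem_compl] at this; exact this
    · exact Finset.card_le_card hS
  have hUc : Uᶜ.card = n - U.card := by
    rw [Finset.card_compl, Fintype.card_fin]
  have hUn : U.card ≤ n := by
    simpa using Finset.card_le_card (Finset.subset_univ U)
  have h3 : ∀ S ∈ Uᶜ.powerset, p ^ (S ∪ U).card * (1 - p) ^ (n - (S ∪ U).card)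
      = p ^ U.card * (p ^ S.card * (1 - p) ^ ((Uᶜ \ S).card)) := by
    intro S hS
    obtain ⟨hc, hle⟩ := hcard S hS
    rw [Finset.card_sdiff_of_subset (Finset.mem_powerset.1 hS), hc, pow_add]
    rw [hUc] at hle ⊢
    have : n - (S.card + U.card) = n - U.card - S.card := by omega
    rw [this]
    ring
  rw [Finset.sum_congr rfl h3, ← Finset.mul_sum]
  have h4 : ∑ S ∈ Uᶜ.powerset, p ^ S.card * (1 - p) ^ ((Uᶜ \ S).card) = 1 := by
    have := Finset.prod_add (fun _ : Fin n => p) (fun _ : Fin n => 1 - p) Uᶜ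
    simp only [Finset.prod_const] at this
    rw [← this]
    simp
  rw [h4, mul_one]

lemma uvar_biasFn (T : Finset (Fin n)) (f : (Fin n → Bool) → ℝ) :
    uvar (biasFn T f) = ∑ S ∈ Finset.univ.erase (∅ : Finset (Fin n)),
      fhat f S ^ 2 * ind (S ⊆ T) := by
  rw [uvar_eq]
  refine Finset.sum_congr rfl fun S _ => ?_
  rw [fhat_biasFn]
  by_cases h : S ⊆ T <;> simp [h]


end Fourier


/-- A `δ_T`-biased distribution with marginals `p` fools products of
variances of bias functions, up to error `δ_T · Π Var[f_i]`. -/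
theorem vars_prod
    (n : ℕ) (p δT : ℝ) (hp0 : 0 ≤ p) (hp1 : p ≤ 1) (hδ : 0 ≤ δT)
    (μ : Finset (Fin n) → ℝ) (hμ0 : ∀ T, 0 ≤ μ T)
    (hμ1 : ∑ T : Finset (Fin n), μ T = 1)
    (hbias : ∀ S : Finset (Fin n), S.Nonempty →
      |(∑ T : Finset (Fin n), μ T * ind (S ⊆ T)) - p ^ S.card| ≤ δT)
    (ℓ : ℕ) (f : Fin ℓ → (Fin n → Bool) → ℝ) :
    |(∑ T : Finset (Fin n), μ T * ∏ i, uvar (biasFn T (f i))) -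
        rpExpect n p (fun T => ∏ i, uvar (biasFn T (f i)))| ≤
      δT * ∏ i, uvar (f i) := by
  classical
  set 𝒮 : Finset (Finset (Fin n)) := Finset.univ.erase ∅ with h𝒮
  set w : Fin ℓ → Finset (Fin n) → ℝ := fun i S => fhat (f i) S ^ 2 with hw
  set P := Fintype.piFinset (fun _ : Fin ℓ => 𝒮) with hP
  have hwnn : ∀ (g : Fin ℓ → Finset (Fin n)), 0 ≤ ∏ i, w i (g i) :=
    fun g => Finset.prod_nonneg fun i _ => sq_nonneg _
  have hT : ∀ T : Finset (Fin n), ∏ i, uvar (biasFn T (f i))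
      = ∑ g ∈ P, (∏ i, w i (g i)) * ind (Finset.univ.sup g ⊆ T) := by
    intro T
    rw [Finset.prod_congr rfl fun i _ => uvar_biasFn T (f i), Finset.prod_univ_sum]
    refine Finset.sum_congr rfl fun g _ => ?_
    rw [Finset.prod_mul_distrib]
    congr 1
    rw [prod_ind]
    refine ind_congr ?_
    constructor
    · intro h
      exact Finset.sup_le fun i _ => h i
    · intro h i
      exact le_trans (Finset.le_sup (Finset.mem_univ i)) h
  have hL : (∑ T : Finset (Fin n), μ T * ∏ i, uvar (biasFn T (f i)))
      = ∑ g ∈ P, (∏ i, w i (g i)) *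
          (∑ T : Finset (Fin n), μ T * ind (Finset.univ.sup g ⊆ T)) := by
    simp only [hT, Finset.mul_sum]
    rw [Finset.sum_comm]
    refine Finset.sum_congr rfl fun g _ => ?_
    exact Finset.sum_congr rfl fun T _ => by ring
  have hR : rpExpect n p (fun T => ∏ i, uvar (biasFn T (f i)))
      = ∑ g ∈ P, (∏ i, w i (g i)) * p ^ (Finset.univ.sup g).card := by
    rw [rpExpect]
    simp only [hT, Finset.mul_sum]
    rw [Finset.sum_comm]
    refine Finset.sum_congr rfl fun g _ => ?_
    rw [← rp_ind p (Finset.univ.sup g), rpExpect, Finset.mul_sum]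
    exact Finset.sum_congr rfl fun T _ => by ring
  rw [hL, hR, ← Finset.sum_sub_distrib]
  have key : ∀ g ∈ P,
      |(∏ i, w i (g i)) * (∑ T : Finset (Fin n), μ T * ind (Finset.univ.sup g ⊆ T))
        - (∏ i, w i (g i)) * p ^ (Finset.univ.sup g).card|
      ≤ (∏ i, w i (g i)) * δT := by
    intro g _
    rw [← mul_sub, abs_mul, abs_of_nonneg (hwnn g)]
    refine mul_le_mul_of_nonneg_left ?_ (hwnn g)
    by_cases hge : Finset.univ.sup g = ∅
    · rw [hge]
      have h1 : ∑ T : Finset (Fin n), μ T * ind ((∅ : Finset (Fin n)) ⊆ T) = 1 := by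
        rw [Finset.sum_congr rfl fun T _ => by
          rw [ind_true (Finset.empty_subset T), mul_one]]
        exact hμ1
      rw [h1]
      simpa using hδ
    · exact hbias _ (Finset.nonempty_iff_ne_empty.2 hge)
  refine le_trans (Finset.abs_sum_le_sum_abs _ _) ?_
  refine le_trans (Finset.sum_le_sum key) ?_
  rw [← Finset.sum_mul, hP, Finset.sum_prod_piFinset,
    Finset.prod_congr rfl fun i (_ : i ∈ Finset.univ) => (uvar_eq (f i)).symm, mul_comm]
end

section
/- In a ROBP of width w with at most ℓ colliding layers, every vertex v with p_v > 0 satisfies p_v ≥ 2^{−(ℓ+1)(w−1)}, where p_v is the probability of reaching v on a uniformly random input. -/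
open Finset

/- ===== Auxiliary development ===== -/

open Classical

lemma ind_nonneg (P : Prop) : 0 ≤ ind P := by
  unfold ind; split <;> norm_num

lemma one_le_ind_add_ind {P Q : Prop} (h : P ∨ Q) : 1 ≤ ind P + ind Q := by
  unfold ind
  rcases h with h | h <;> simp [h] <;> split <;> norm_num

namespace ROBP

variable {w n : ℕ}

lemma runTo_stop (B : ROBP w n) (x : Fin n → Bool) (v : Fin w) {i j : ℕ}
    (h : ¬(i < j ∧ i < n)) : B.runTo x v i j = v := by
  rw [runTo]; simp [h]

lemma runTo_step (B : ROBP w n) (x : Fin n → Bool) (v : Fin w) {i j : ℕ}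
    (h1 : i < j) (h2 : i < n) :
    B.runTo x v i j = B.runTo x (B.trans ⟨i, h2⟩ (x ⟨i, h2⟩) v) (i + 1) j := by
  rw [runTo]; simp [h1, h2]

lemma runTo_succ_right (B : ROBP w n) (x : Fin n → Bool) {j : ℕ} (hjn : j < n) :
    ∀ (k i : ℕ) (v : Fin w), j - i = k → i ≤ j →
      B.runTo x v i (j + 1) = B.trans ⟨j, hjn⟩ (x ⟨j, hjn⟩) (B.runTo x v i j) := by
  intro k
  induction k with
  | zero =>
    intro i v hk hij
    have hi : i = j := by omega
    subst hi
    rw [B.runTo_step x v (by omega) hjn, B.runTo_stop x _ (by omega),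
        B.runTo_stop x v (by omega)]
  | succ k ih =>
    intro i v hk hij
    have hin : i < n := by omega
    rw [B.runTo_step x v (by omega) hin, B.runTo_step x v (by omega) hin]
    exact ih (i + 1) _ (by omega) (by omega)

lemma runTo_congr (B : ROBP w n) {x y : Fin n → Bool} {j : ℕ} :
    ∀ (k i : ℕ) (v : Fin w), j - i = k →
      (∀ t (ht : t < n), i ≤ t → t < j → x ⟨t, ht⟩ = y ⟨t, ht⟩) →
      B.runTo x v i j = B.runTo y v i j := by
  intro k
  induction k with
  | zero =>
    intro i v hk _
    have h : ¬(i < j ∧ i < n) := by omega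
    rw [B.runTo_stop x v h, B.runTo_stop y v h]
  | succ k ih =>
    intro i v hk hagree
    by_cases h : i < j ∧ i < n
    · rw [B.runTo_step x v h.1 h.2, B.runTo_step y v h.1 h.2, hagree i h.2 le_rfl h.1]
      exact ih (i + 1) _ (by omega) (fun t ht h1 h2 => hagree t ht (by omega) h2)
    · rw [B.runTo_stop x v h, B.runTo_stop y v h]

lemma runTo_mem (B : ROBP w n) (x : Fin n → Bool) {j : ℕ} (hjn : j ≤ n) :
    ∀ (k i : ℕ) (v : Fin w) (hk : j - i = k) (hij : i ≤ j),
      v ∈ B.V ⟨i, by omega⟩ → B.runTo x v i j ∈ B.V ⟨j, by omega⟩ := by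
  intro k
  induction k with
  | zero =>
    intro i v hk hij hv
    have hi : i = j := by omega
    subst hi
    rw [B.runTo_stop x v (by omega)]
    exact hv
  | succ k ih =>
    intro i v hk hij hv
    have hin : i < n := by omega
    rw [B.runTo_step x v (by omega) hin]
    apply ih (i + 1) _ (by omega) (by omega)
    exact B.trans_mem ⟨i, hin⟩ (x ⟨i, hin⟩) v hv

lemma reachProb_nonneg (B : ROBP w n) (j : ℕ) (v : Fin w) : 0 ≤ B.reachProb j v := by
  unfold reachProb uexp
  apply div_nonneg _ (by positivity)
  apply Finset.sum_nonneg
  intro x _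
  split <;> norm_num

lemma reachProb_zero (B : ROBP w n) (v : Fin w) :
    B.reachProb 0 v = if B.start = v then 1 else 0 := by
  unfold reachProb uexp
  have h : ∀ x : Fin n → Bool, B.runTo x B.start 0 0 = B.start := fun x =>
    B.runTo_stop x B.start (by omega)
  simp only [h]
  rw [Finset.sum_const, Finset.card_univ, nsmul_eq_mul]
  rw [mul_comm, mul_div_assoc, div_self (by positivity), mul_one]

lemma sum_reachProb (B : ROBP w n) (j : ℕ) : ∑ v : Fin w, B.reachProb j v = 1 := by
  unfold reachProb uexp
  rw [← Finset.sum_div]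
  rw [Finset.sum_comm]
  have h : ∀ x : Fin n → Bool,
      (∑ v : Fin w, if B.runTo x B.start 0 j = v then (1 : ℝ) else 0) = 1 := by
    intro x
    rw [Finset.sum_ite_eq]
    simp
  rw [Finset.sum_congr rfl (fun x _ => h x)]
  rw [Finset.sum_const, Finset.card_univ, nsmul_eq_mul, mul_one,
    div_self (by positivity)]

lemma exists_run_of_pos (B : ROBP w n) {j : ℕ} {v : Fin w}
    (hv : 0 < B.reachProb j v) : ∃ x, B.runTo x B.start 0 j = v := by
  by_contra hc
  push_neg at hc
  have : B.reachProb j v = 0 := by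
    unfold reachProb uexp
    rw [Finset.sum_eq_zero (fun x _ => by simp [hc x])]
    simp
  rw [this] at hv
  exact lt_irrefl 0 hv

lemma reachProb_mem_V (B : ROBP w n) {j : ℕ} (hj : j ≤ n) {v : Fin w}
    (hv : 0 < B.reachProb j v) : v ∈ B.V ⟨j, by omega⟩ := by
  obtain ⟨x, hx⟩ := B.exists_run_of_pos hv
  rw [← hx]
  exact B.runTo_mem x hj j 0 B.start (by omega) (by omega) B.start_mem

lemma reachProb_succ (B : ROBP w n) {j : ℕ} (hjn : j < n) (u : Fin w) :
    B.reachProb (j + 1) u = (1 / 2) * ∑ v : Fin w,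
      ((ind (B.trans ⟨j, hjn⟩ true v = u) + ind (B.trans ⟨j, hjn⟩ false v = u)) *
        B.reachProb j v) := by
  classical
  set R : (Fin n → Bool) → Fin w := fun x => B.runTo x B.start 0 j with hRdef
  have hR : ∀ (x : Fin n → Bool) (b : Bool),
      R (Function.update x ⟨j, hjn⟩ b) = R x := by
    intro x b
    apply B.runTo_congr j 0 B.start (by omega)
    intro t ht h1 h2
    apply Function.update_of_ne
    exact fun hteq => by simp [Fin.ext_iff] at hteq; omega
  have hrun : ∀ x, B.runTo x B.start 0 (j + 1)
      = B.trans ⟨j, hjn⟩ (x ⟨j, hjn⟩) (R x) :=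
    fun x => B.runTo_succ_right x hjn j 0 B.start (by omega) (by omega)
  set σ : (Fin n → Bool) → (Fin n → Bool) :=
    fun x => Function.update x ⟨j, hjn⟩ (!(x ⟨j, hjn⟩)) with hσdef
  have hσ : Function.Involutive σ := by
    intro x
    funext t
    by_cases ht : t = ⟨j, hjn⟩
    · subst ht; simp [hσdef]
    · simp [hσdef, Function.update_of_ne ht]
  have key : ∀ (H : Bool → Fin w → ℝ),
      (2 : ℝ) * ∑ x : Fin n → Bool, H (x ⟨j, hjn⟩) (R x)
        = ∑ x : Fin n → Bool, (H true (R x) + H false (R x)) := by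
    intro H
    have h1 : ∑ x : Fin n → Bool, H (x ⟨j, hjn⟩) (R x)
        = ∑ x : Fin n → Bool, H (!(x ⟨j, hjn⟩)) (R x) := by
      rw [← Equiv.sum_comp (Function.Involutive.toPerm σ hσ)
        (fun x => H (x ⟨j, hjn⟩) (R x))]
      apply Finset.sum_congr rfl
      intro x _
      have e0 : (Function.Involutive.toPerm σ hσ) x = σ x := rfl
      simp only [e0]
      have e1 : (σ x) ⟨j, hjn⟩ = !(x ⟨j, hjn⟩) := by
        simp [hσdef]
      have e2 : R (σ x) = R x := hR x _
      rw [e1, e2]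
    have h2 : ∀ x : Fin n → Bool,
        H (x ⟨j, hjn⟩) (R x) + H (!(x ⟨j, hjn⟩)) (R x)
          = H true (R x) + H false (R x) := by
      intro x
      cases hb : x ⟨j, hjn⟩ <;> simp [add_comm]
    rw [two_mul]
    nth_rewrite 2 [h1]
    rw [← Finset.sum_add_distrib]
    exact Finset.sum_congr rfl (fun x _ => h2 x)
  have pick : ∀ (g : Fin w → ℝ) (z : Fin w),
      g z = ∑ v : Fin w, ind (z = v) * g v := by
    intro g z
    unfold ind
    simp [ite_mul, Finset.sum_ite_eq]
  unfold reachProb uexp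
  have hind : ∀ x, (if B.runTo x B.start 0 (j + 1) = u then (1:ℝ) else 0)
      = ind (B.trans ⟨j, hjn⟩ (x ⟨j, hjn⟩) (R x) = u) := by
    intro x
    rw [hrun x]
    unfold ind
    split <;> rfl
  rw [Finset.sum_congr rfl (fun x _ => hind x)]
  have hkey := key (fun b z => ind (B.trans ⟨j, hjn⟩ b z = u))
  have hsum : ∑ x : Fin n → Bool, ind (B.trans ⟨j, hjn⟩ (x ⟨j, hjn⟩) (R x) = u)
      = (1 / 2) * ∑ x : Fin n → Bool,
          (ind (B.trans ⟨j, hjn⟩ true (R x) = u)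
            + ind (B.trans ⟨j, hjn⟩ false (R x) = u)) := by
    rw [← hkey]; ring
  rw [hsum]
  have hexp : ∀ x : Fin n → Bool,
      ind (B.trans ⟨j, hjn⟩ true (R x) = u) + ind (B.trans ⟨j, hjn⟩ false (R x) = u)
        = ∑ v : Fin w, (ind (B.trans ⟨j, hjn⟩ true v = u)
            + ind (B.trans ⟨j, hjn⟩ false v = u)) * ind (R x = v) := by
    intro x
    rw [pick (fun z => ind (B.trans ⟨j, hjn⟩ true z = u)
        + ind (B.trans ⟨j, hjn⟩ false z = u)) (R x)]
    exact Finset.sum_congr rfl (fun v _ => by ring)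
  rw [Finset.sum_congr rfl (fun x _ => hexp x), Finset.sum_comm, mul_div_assoc]
  congr 1
  rw [Finset.sum_div]
  apply Finset.sum_congr rfl
  intro v _
  rw [← Finset.mul_sum, mul_div_assoc]
  congr 2
  apply Finset.sum_congr rfl
  intro x _
  by_cases hx : B.runTo x B.start 0 j = v
  · simp [ind, hRdef, hx]
  · simp [ind, hRdef, hx]

lemma reachProb_succ_term_le (B : ROBP w n) {j : ℕ} (hjn : j < n) (u v0 : Fin w) :
    (1 / 2) * ((ind (B.trans ⟨j, hjn⟩ true v0 = u) + ind (B.trans ⟨j, hjn⟩ false v0 = u)) *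
      B.reachProb j v0) ≤ B.reachProb (j + 1) u := by
  rw [B.reachProb_succ hjn u]
  apply mul_le_mul_of_nonneg_left _ (by norm_num)
  exact Finset.single_le_sum
    (f := fun v => (ind (B.trans ⟨j, hjn⟩ true v = u) + ind (B.trans ⟨j, hjn⟩ false v = u)) *
      B.reachProb j v)
    (fun i _ => mul_nonneg (add_nonneg (ind_nonneg _) (ind_nonneg _)) (B.reachProb_nonneg j i))
    (Finset.mem_univ v0)

lemma reachProb_half_le (B : ROBP w n) {j : ℕ} (hjn : j < n) {b : Bool} {v u : Fin w}
    (hb : B.trans ⟨j, hjn⟩ b v = u) :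
    B.reachProb j v / 2 ≤ B.reachProb (j + 1) u := by
  have hterm := B.reachProb_succ_term_le hjn u v
  have h1 : 1 ≤ ind (B.trans ⟨j, hjn⟩ true v = u) + ind (B.trans ⟨j, hjn⟩ false v = u) := by
    apply one_le_ind_add_ind
    cases b
    · right; exact hb
    · left; exact hb
  have hP := B.reachProb_nonneg j v
  calc B.reachProb j v / 2 = (1 / 2) * (1 * B.reachProb j v) := by ring
    _ ≤ (1 / 2) * ((ind (B.trans ⟨j, hjn⟩ true v = u) + ind (B.trans ⟨j, hjn⟩ false v = u)) *
        B.reachProb j v) := by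
      apply mul_le_mul_of_nonneg_left (mul_le_mul_of_nonneg_right h1 hP) (by norm_num)
    _ ≤ B.reachProb (j + 1) u := hterm

lemma reachProb_pos_succ (B : ROBP w n) {j : ℕ} (hjn : j < n) (b : Bool) {v : Fin w}
    (hv : 0 < B.reachProb j v) : 0 < B.reachProb (j + 1) (B.trans ⟨j, hjn⟩ b v) :=
  lt_of_lt_of_le (by linarith) (B.reachProb_half_le hjn (b := b) rfl)

lemma exists_pred (B : ROBP w n) {j : ℕ} (hjn : j < n) {u : Fin w}
    (hu : 0 < B.reachProb (j + 1) u) :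
    ∃ v, 0 < B.reachProb j v ∧ B.reachProb j v / 2 ≤ B.reachProb (j + 1) u ∧
      (B.trans ⟨j, hjn⟩ true v = u ∨ B.trans ⟨j, hjn⟩ false v = u) := by
  by_contra hc
  push_neg at hc
  have hz : ∀ v ∈ (univ : Finset (Fin w)),
      (ind (B.trans ⟨j, hjn⟩ true v = u) + ind (B.trans ⟨j, hjn⟩ false v = u)) *
        B.reachProb j v = 0 := by
    intro v _
    rcases eq_or_lt_of_le (B.reachProb_nonneg j v) with h0 | hp
    · rw [← h0, mul_zero]
    · by_cases hC : B.trans ⟨j, hjn⟩ true v = u ∨ B.trans ⟨j, hjn⟩ false v = u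
      · exfalso
        have hhalf : B.reachProb j v / 2 ≤ B.reachProb (j + 1) u := by
          rcases hC with h | h
          · exact B.reachProb_half_le hjn h
          · exact B.reachProb_half_le hjn h
        rcases hC with h | h
        · exact (hc v hp hhalf).1 h
        · exact (hc v hp hhalf).2 h
      · push_neg at hC
        simp [ind, hC.1, hC.2]
  have h0 : B.reachProb (j + 1) u = 0 := by
    rw [B.reachProb_succ hjn u, Finset.sum_eq_zero hz, mul_zero]
  rw [h0] at hu
  exact lt_irrefl 0 hu

lemma two_pred_le (B : ROBP w n) {j : ℕ} (hjn : j < n) {u vt vf : Fin w}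
    (ht : B.trans ⟨j, hjn⟩ true vt = u) (hf : B.trans ⟨j, hjn⟩ false vf = u) :
    (B.reachProb j vt + B.reachProb j vf) / 2 ≤ B.reachProb (j + 1) u := by
  by_cases hv : vt = vf
  · subst hv
    have hterm := B.reachProb_succ_term_le hjn u vt
    rw [show ind (B.trans ⟨j, hjn⟩ true vt = u) = 1 by simp [ind, ht],
        show ind (B.trans ⟨j, hjn⟩ false vt = u) = 1 by simp [ind, hf]] at hterm
    calc (B.reachProb j vt + B.reachProb j vt) / 2 = (1 / 2) * ((1 + 1) * B.reachProb j vt) := by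
          ring
      _ ≤ B.reachProb (j + 1) u := hterm
  · rw [B.reachProb_succ hjn u]
    have hsub : ∑ v ∈ ({vt, vf} : Finset (Fin w)),
        (ind (B.trans ⟨j, hjn⟩ true v = u) + ind (B.trans ⟨j, hjn⟩ false v = u)) *
          B.reachProb j v
        ≤ ∑ v : Fin w,
        (ind (B.trans ⟨j, hjn⟩ true v = u) + ind (B.trans ⟨j, hjn⟩ false v = u)) *
          B.reachProb j v := by
      apply Finset.sum_le_sum_of_subset_of_nonneg (Finset.subset_univ _)
      intro i _ _
      exact mul_nonneg (add_nonneg (ind_nonneg _) (ind_nonneg _)) (B.reachProb_nonneg j i)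
    rw [Finset.sum_pair hv] at hsub
    rw [show ind (B.trans ⟨j, hjn⟩ true vt = u) = 1 by simp [ind, ht],
        show ind (B.trans ⟨j, hjn⟩ false vf = u) = 1 by simp [ind, hf]] at hsub
    have n1 := ind_nonneg (B.trans ⟨j, hjn⟩ false vt = u)
    have n2 := ind_nonneg (B.trans ⟨j, hjn⟩ true vf = u)
    have p1 := B.reachProb_nonneg j vt
    have p2 := B.reachProb_nonneg j vf
    nlinarith [hsub]

lemma mem_V_castSucc (B : ROBP w n) {j : ℕ} (hjn : j < n) {z : Fin w}
    (hz : 0 < B.reachProb j z) : z ∈ B.V ((⟨j, hjn⟩ : Fin n).castSucc) := by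
  have h := B.reachProb_mem_V (le_of_lt hjn) hz
  have e : ((⟨j, hjn⟩ : Fin n).castSucc) = (⟨j, by omega⟩ : Fin (n + 1)) := rfl
  rw [e]
  exact h

lemma injOn_trans (B : ROBP w n) {j : ℕ} (hjn : j < n) (b : Bool)
    (hnc : ¬ B.Colliding ⟨j, hjn⟩) :
    Set.InjOn (B.trans ⟨j, hjn⟩ b)
      (univ.filter fun z => 0 < B.reachProb j z : Finset (Fin w)) := by
  intro a ha b' hb' hab
  by_contra hne
  rw [Finset.coe_filter] at ha hb'
  exact hnc ⟨b, a, b', B.mem_V_castSucc hjn ha.2, B.mem_V_castSucc hjn hb'.2, hne, hab⟩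

lemma card_le_card_succ (B : ROBP w n) {j : ℕ} (hjn : j < n)
    (hnc : ¬ B.Colliding ⟨j, hjn⟩) :
    ((univ : Finset (Fin w)).filter fun z => 0 < B.reachProb j z).card ≤
      ((univ : Finset (Fin w)).filter fun z => 0 < B.reachProb (j + 1) z).card := by
  apply Finset.card_le_card_of_injOn (B.trans ⟨j, hjn⟩ true)
  · intro v hv
    rw [Finset.mem_coe, Finset.mem_filter] at hv ⊢
    exact ⟨Finset.mem_univ _, B.reachProb_pos_succ hjn true hv.2⟩
  · exact B.injOn_trans hjn true hnc

lemma surj_trans (B : ROBP w n) {j : ℕ} (hjn : j < n) (b : Bool)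
    (hnc : ¬ B.Colliding ⟨j, hjn⟩)
    (hcard : ((univ : Finset (Fin w)).filter fun z => 0 < B.reachProb (j + 1) z).card ≤
      ((univ : Finset (Fin w)).filter fun z => 0 < B.reachProb j z).card)
    {u : Fin w} (hu : 0 < B.reachProb (j + 1) u) :
    ∃ v, 0 < B.reachProb j v ∧ B.trans ⟨j, hjn⟩ b v = u := by
  classical
  set S := (univ : Finset (Fin w)).filter fun z => 0 < B.reachProb j z with hS
  set S' := (univ : Finset (Fin w)).filter fun z => 0 < B.reachProb (j + 1) z with hS'
  have h1 : (S.image (B.trans ⟨j, hjn⟩ b)).card = S.card :=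
    Finset.card_image_of_injOn (B.injOn_trans hjn b hnc)
  have h2 : S.image (B.trans ⟨j, hjn⟩ b) ⊆ S' := by
    intro z hz
    rw [Finset.mem_image] at hz
    obtain ⟨v, hv, hvz⟩ := hz
    rw [Finset.mem_filter] at hv
    rw [Finset.mem_filter]
    refine ⟨Finset.mem_univ _, ?_⟩
    rw [← hvz]
    exact B.reachProb_pos_succ hjn b hv.2
  have h3 : S.image (B.trans ⟨j, hjn⟩ b) = S' :=
    Finset.eq_of_subset_of_card_le h2 (by omega)
  have hu' : u ∈ S' := Finset.mem_filter.mpr ⟨Finset.mem_univ _, hu⟩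
  rw [← h3, Finset.mem_image] at hu'
  obtain ⟨v, hv, hvu⟩ := hu'
  rw [Finset.mem_filter] at hv
  exact ⟨v, hv.2, hvu⟩

lemma eq_one_of_card_one (B : ROBP w n) {j : ℕ} {u : Fin w}
    (hcard : ((univ : Finset (Fin w)).filter fun z => 0 < B.reachProb j z).card = 1)
    (hu : 0 < B.reachProb j u) : B.reachProb j u = 1 := by
  classical
  obtain ⟨a, ha⟩ := Finset.card_eq_one.mp hcard
  have hua : u = a := by
    have h1 : u ∈ (univ : Finset (Fin w)).filter fun z => 0 < B.reachProb j z :=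
      Finset.mem_filter.mpr ⟨Finset.mem_univ _, hu⟩
    rw [ha, Finset.mem_singleton] at h1
    exact h1
  subst hua
  have hz : ∀ z ∈ (univ : Finset (Fin w)), z ≠ u → B.reachProb j z = 0 := by
    intro z _ hzu
    rcases eq_or_lt_of_le (B.reachProb_nonneg j z) with h | h
    · exact h.symm
    · exfalso
      have h1 : z ∈ (univ : Finset (Fin w)).filter fun z => 0 < B.reachProb j z :=
        Finset.mem_filter.mpr ⟨Finset.mem_univ _, h⟩
      rw [ha, Finset.mem_singleton] at h1
      exact hzu h1
  have hsum := B.sum_reachProb j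
  rw [Finset.sum_eq_single u hz (fun h => absurd (Finset.mem_univ u) h)] at hsum
  exact hsum

private lemma step_ineq {p q : ℝ} {a b : ℕ} (hp : 0 ≤ p) (h1 : 1 ≤ p * 2 ^ a)
    (hpq : p / 2 ≤ q) (hab : a + 1 ≤ b) : 1 ≤ q * 2 ^ b := by
  have hq : 0 ≤ q := le_trans (by linarith) hpq
  have h2 : (2 : ℝ) ^ (a + 1) ≤ 2 ^ b := pow_le_pow_right₀ one_le_two hab
  calc (1 : ℝ) ≤ p * 2 ^ a := h1
    _ = (p / 2) * 2 ^ (a + 1) := by rw [pow_succ]; ring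
    _ ≤ q * 2 ^ (a + 1) := mul_le_mul_of_nonneg_right hpq (by positivity)
    _ ≤ q * 2 ^ b := mul_le_mul_of_nonneg_left h2 hq

private lemma step_ineq' {p q : ℝ} {a b : ℕ} (hp : 0 ≤ p) (h1 : 1 ≤ p * 2 ^ a)
    (hpq : p ≤ q) (hab : a ≤ b) : 1 ≤ q * 2 ^ b := by
  have hq : 0 ≤ q := le_trans hp hpq
  have h2 : (2 : ℝ) ^ a ≤ 2 ^ b := pow_le_pow_right₀ one_le_two hab
  calc (1 : ℝ) ≤ p * 2 ^ a := h1
    _ ≤ q * 2 ^ a := mul_le_mul_of_nonneg_right hpq (by positivity)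
    _ ≤ q * 2 ^ b := mul_le_mul_of_nonneg_left h2 hq

lemma reach_key (B : ROBP w n) : ∀ j : ℕ, j ≤ n → ∀ v : Fin w, 0 < B.reachProb j v →
    1 ≤ B.reachProb j v * 2 ^
      ((((univ : Finset (Fin w)).filter fun z => 0 < B.reachProb j z).card - 1)
        + ((univ : Finset (Fin n)).filter fun i : Fin n => (i : ℕ) < j ∧ B.Colliding i).card
          * (w - 1)) := by
  intro j
  induction j with
  | zero =>
    intro _ v hv
    rw [B.reachProb_zero] at hv ⊢
    by_cases h : B.start = v
    · rw [if_pos h, one_mul]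
      exact one_le_pow₀ one_le_two
    · rw [if_neg h] at hv
      norm_num at hv
  | succ j ih =>
    intro hj1 u hu
    have hjn : j < n := by omega
    obtain ⟨v0, hv0, hv0le, _⟩ := B.exists_pred hjn hu
    have hP0 := B.reachProb_nonneg j v0
    set S := (univ : Finset (Fin w)).filter fun z => 0 < B.reachProb j z with hSdef
    set S' := (univ : Finset (Fin w)).filter fun z => 0 < B.reachProb (j + 1) z with hS'def
    set c := ((univ : Finset (Fin n)).filter fun i : Fin n => (i : ℕ) < j ∧ B.Colliding i).card
      with hcdef
    set c' := ((univ : Finset (Fin n)).filter fun i : Fin n => (i : ℕ) < j + 1 ∧ B.Colliding i).card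
      with hc'def
    have hfsub : ((univ : Finset (Fin n)).filter fun i : Fin n => (i : ℕ) < j ∧ B.Colliding i)
        ⊆ ((univ : Finset (Fin n)).filter fun i : Fin n => (i : ℕ) < j + 1 ∧ B.Colliding i) := by
      intro i hi
      rw [Finset.mem_filter] at hi ⊢
      exact ⟨hi.1, by omega, hi.2.2⟩
    have hcc : c ≤ c' := Finset.card_le_card hfsub
    have hv0S : v0 ∈ S := Finset.mem_filter.mpr ⟨Finset.mem_univ _, hv0⟩
    have huS' : u ∈ S' := Finset.mem_filter.mpr ⟨Finset.mem_univ _, hu⟩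
    have hS1 : 1 ≤ S.card := Finset.card_pos.mpr ⟨v0, hv0S⟩
    have hS'1 : 1 ≤ S'.card := Finset.card_pos.mpr ⟨u, huS'⟩
    have hSw : S.card ≤ w := le_trans (Finset.card_filter_le _ _) (by simp)
    have hw1 : 1 ≤ w := by omega
    by_cases hcol : B.Colliding ⟨j, hjn⟩
    · have hcc1 : c + 1 ≤ c' := by
        have hlt : c < c' := by
          apply Finset.card_lt_card
          apply (Finset.ssubset_iff_of_subset hfsub).mpr
          refine ⟨⟨j, hjn⟩, ?_, ?_⟩
          · rw [Finset.mem_filter]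
            exact ⟨Finset.mem_univ _, show j < j + 1 by omega, hcol⟩
          · rw [Finset.mem_filter]
            push_neg
            intro _ h
            exact absurd (show j < j from h) (lt_irrefl j)
        omega
      by_cases hone : S'.card = 1
      · rw [B.eq_one_of_card_one hone hu, one_mul]
        exact one_le_pow₀ one_le_two
      · have hS'2 : 2 ≤ S'.card := by omega
        apply step_ineq hP0 (ih (by omega) v0 hv0) hv0le
        have hmul : c * (w - 1) + (w - 1) ≤ c' * (w - 1) := by
          have h5 : (c + 1) * (w - 1) ≤ c' * (w - 1) := Nat.mul_le_mul_right _ hcc1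
          rw [add_mul, one_mul] at h5
          exact h5
        set A := c * (w - 1)
        set A' := c' * (w - 1)
        omega
    · have hss' : S.card ≤ S'.card := B.card_le_card_succ hjn hcol
      by_cases heq : S'.card ≤ S.card
      · obtain ⟨vt, hvt, hvtu⟩ := B.surj_trans hjn true hcol heq hu
        obtain ⟨vf, hvf, hvfu⟩ := B.surj_trans hjn false hcol heq hu
        have hle := B.two_pred_le hjn hvtu hvfu
        have hcards : S'.card = S.card := by omega
        have hmul : c * (w - 1) ≤ c' * (w - 1) := Nat.mul_le_mul_right _ hcc
        rcases le_total (B.reachProb j vt) (B.reachProb j vf) with hmin | hmin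
        · apply step_ineq' (B.reachProb_nonneg j vt) (ih (by omega) vt hvt) (by linarith)
          set A := c * (w - 1)
          set A' := c' * (w - 1)
          omega
        · apply step_ineq' (B.reachProb_nonneg j vf) (ih (by omega) vf hvf) (by linarith)
          set A := c * (w - 1)
          set A' := c' * (w - 1)
          omega
      · have hlt : S.card + 1 ≤ S'.card := by omega
        apply step_ineq hP0 (ih (by omega) v0 hv0) hv0le
        have hmul : c * (w - 1) ≤ c' * (w - 1) := Nat.mul_le_mul_right _ hcc
        set A := c * (w - 1)
        set A' := c' * (w - 1)
        omega

end ROBP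

/-- In a width-`w` ROBP with at most `ℓ` colliding layers, every
vertex reached with positive probability is reached with probability at least
`2^(-(ℓ+1)(w-1))`. -/
theorem reach_prob_lower_bound
    (w n ℓ : ℕ) (B : ROBP w n) (hcol : B.collidingCount ≤ ℓ)
    (j : ℕ) (hj : j ≤ n) (v : Fin w) (hv : 0 < B.reachProb j v) :
    (1 : ℝ) / 2 ^ ((ℓ + 1) * (w - 1)) ≤ B.reachProb j v := by
  classical
  have hkey := B.reach_key j hj v hv
  have hp := B.reachProb_nonneg j v
  set s := ((Finset.univ : Finset (Fin w)).filter fun z => 0 < B.reachProb j z).card with hs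
  set c := ((Finset.univ : Finset (Fin n)).filter
    fun i : Fin n => (i : ℕ) < j ∧ B.Colliding i).card with hc
  have hsw : s ≤ w := le_trans (Finset.card_filter_le _ _) (by simp)
  have hs1 : 1 ≤ s := Finset.card_pos.mpr
    ⟨v, Finset.mem_filter.mpr ⟨Finset.mem_univ _, hv⟩⟩
  have hcl : c ≤ ℓ := by
    have h1 : c ≤ ((Finset.univ : Finset (Fin n)).filter fun i => B.Colliding i).card := by
      apply Finset.card_le_card
      intro i hi
      rw [Finset.mem_filter] at hi ⊢
      exact ⟨hi.1, hi.2.2⟩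
    have h2 : B.collidingCount
        = ((Finset.univ : Finset (Fin n)).filter fun i => B.Colliding i).card := by
      unfold ROBP.collidingCount
      rw [Nat.card_eq_fintype_card, Fintype.card_subtype]
    omega
  have hexp : s - 1 + c * (w - 1) ≤ (ℓ + 1) * (w - 1) := by
    have h3 : c * (w - 1) ≤ ℓ * (w - 1) := Nat.mul_le_mul_right _ hcl
    have h4 : (ℓ + 1) * (w - 1) = ℓ * (w - 1) + (w - 1) := by ring
    set A := c * (w - 1)
    set A' := ℓ * (w - 1)
    set A'' := (ℓ + 1) * (w - 1)
    omega
  have h2e : (2 : ℝ) ^ (s - 1 + c * (w - 1)) ≤ 2 ^ ((ℓ + 1) * (w - 1)) :=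
    pow_le_pow_right₀ one_le_two hexp
  rw [div_le_iff₀ (by positivity)]
  calc (1 : ℝ) ≤ B.reachProb j v * 2 ^ (s - 1 + c * (w - 1)) := hkey
    _ ≤ B.reachProb j v * 2 ^ ((ℓ + 1) * (w - 1)) := mul_le_mul_of_nonneg_left h2e hp
end

section
/- Let B = D_1∘…∘D_m be a ROBP where each D_i is a width-3 ROBP with at most 2 vertices on its first and last layers; interpret the value of a program with two start vertices on input x as the average of the ±1 outcomes of the two computation paths from its two start vertices. Then for every j ∈ {2,…,m}, B(x) = (D_j∘…∘D_m)(x) + E(x) where the error term E satisfies |E(x)| ≤ ∧_{i=j}^m ¬FCol_i(x) for every x, with FCol_i(x) denoting the {0,1}-indicator of the event that on input x the two computation paths in D_i collide at the first vertex of D_i at which a collision is possible. -/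
open Finset

/-- The event that, on input `x`, the computation paths starting from all the start
vertices `V a` of the block of layers `(a, b]` collide at the first vertex at which a
collision is possible within the block. -/
def ROBP.FColEvent {w n : ℕ} (B : ROBP w n) (a b : Fin (n + 1))
    (x : Fin n → Bool) : Prop :=
  ∃ (t : ℕ) (v : Fin w),
    (a : ℕ) < t ∧ t ≤ (b : ℕ) ∧
    (∀ (t' : ℕ) (v' : Fin w), (a : ℕ) < t' → t' < t →
      ¬ ∃ y : Fin n → Bool, ∀ u ∈ B.V a, B.runTo y u (a : ℕ) t' = v') ∧
    (∃ y : Fin n → Bool, ∀ u ∈ B.V a, B.runTo y u (a : ℕ) t = v) ∧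
    (∀ u ∈ B.V a, B.runTo x u (a : ℕ) t = v)

private lemma ROBP.runTo_mem_aux {w n : ℕ} (B : ROBP w n) (x : Fin n → Bool) :
    ∀ d i j : ℕ, i + d = j → j ≤ n → ∀ (hi : i < n + 1) (hjn : j < n + 1) (u : Fin w),
      u ∈ B.V ⟨i, hi⟩ → B.runTo x u i j ∈ B.V ⟨j, hjn⟩ := by
  intro d
  induction d with
  | zero =>
    intro i j hij hj hi hjn u hu
    obtain rfl : i = j := by omega
    rw [ROBP.runTo, dif_neg (by omega)]
    exact hu
  | succ d ih =>
    intro i j hij hj hi hjn u hu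
    rw [ROBP.runTo, dif_pos ⟨by omega, by omega⟩]
    exact ih (i + 1) j (by omega) hj (by omega) hjn _ (B.trans_mem ⟨i, by omega⟩ _ u hu)

private lemma ROBP.runTo_mem' {w n : ℕ} (B : ROBP w n) (x : Fin n → Bool)
    (i j : ℕ) (hij : i ≤ j) (hj : j ≤ n) (hi : i < n + 1) (hjn : j < n + 1) (u : Fin w)
    (hu : u ∈ B.V ⟨i, hi⟩) : B.runTo x u i j ∈ B.V ⟨j, hjn⟩ :=
  B.runTo_mem_aux x (j - i) i j (by omega) hj hi hjn u hu

private lemma ROBP.runTo_comp_aux {w n : ℕ} (B : ROBP w n) (x : Fin n → Bool) :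
    ∀ d i j k : ℕ, i + d = j → j ≤ n → j ≤ k → ∀ u : Fin w,
      B.runTo x (B.runTo x u i j) j k = B.runTo x u i k := by
  intro d
  induction d with
  | zero =>
    intro i j k hij hj hjk u
    obtain rfl : i = j := by omega
    have h : B.runTo x u i i = u := by rw [ROBP.runTo, dif_neg (by omega)]
    rw [h]
  | succ d ih =>
    intro i j k hij hj hjk u
    have hin : i < n := by omega
    have h1 : B.runTo x u i j = B.runTo x (B.trans ⟨i, hin⟩ (x ⟨i, hin⟩) u) (i + 1) j := by
      rw [ROBP.runTo, dif_pos ⟨by omega, hin⟩]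
    have h2 : B.runTo x u i k = B.runTo x (B.trans ⟨i, hin⟩ (x ⟨i, hin⟩) u) (i + 1) k := by
      rw [ROBP.runTo, dif_pos ⟨by omega, hin⟩]
    rw [h1, h2]
    exact ih (i + 1) j k (by omega) hj hjk _

private lemma ROBP.runTo_comp' {w n : ℕ} (B : ROBP w n) (x : Fin n → Bool)
    (i j k : ℕ) (hij : i ≤ j) (hj : j ≤ n) (hjk : j ≤ k) (u : Fin w) :
    B.runTo x (B.runTo x u i j) j k = B.runTo x u i k :=
  B.runTo_comp_aux x (j - i) i j k (by omega) hj hjk u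

private lemma avg_const' {α : Type*} {s : Finset α} (hs : s.Nonempty) (f : α → ℝ) (c : ℝ)
    (hf : ∀ v ∈ s, f v = c) : (∑ v ∈ s, f v) / (s.card : ℝ) = c := by
  have hc : (s.card : ℝ) ≠ 0 := by exact_mod_cast hs.card_pos.ne'
  rw [Finset.sum_congr rfl hf, Finset.sum_const, nsmul_eq_mul]
  exact mul_div_cancel_left₀ c hc

private lemma avg_abs_le' {α : Type*} {s : Finset α} (hs : s.Nonempty) (f : α → ℝ)
    (hf : ∀ v ∈ s, |f v| ≤ 1) : |(∑ v ∈ s, f v) / (s.card : ℝ)| ≤ 1 := by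
  have hc : (0 : ℝ) < (s.card : ℝ) := by exact_mod_cast hs.card_pos
  rw [abs_div, abs_of_pos hc, div_le_one hc]
  calc |∑ v ∈ s, f v| ≤ ∑ v ∈ s, |f v| := Finset.abs_sum_le_sum_abs _ _
    _ ≤ ∑ _v ∈ s, (1 : ℝ) := Finset.sum_le_sum hf
    _ = (s.card : ℝ) := by simp

/-- For a concatenation `B = D₁ ∘ ⋯ ∘ D_m` of width-3 blocks whose
boundary layers have at most `2` vertices (values of two-start programs interpreted as
the average over the two computation paths), for every `j ∈ {2, …, m}` the program
satisfies `B(x) = (D_j ∘ ⋯ ∘ D_m)(x) + E(x)` with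
`|E(x)| ≤ ⋀_{i=j}^m ¬ FCol_i(x)`. -/
theorem suffix_decomposition
    (n m : ℕ) (B : ROBP 3 n)
    (cut : Fin (m + 1) → Fin (n + 1)) (hmono : Monotone cut)
    (h0 : cut 0 = 0) (hlast : cut (Fin.last m) = Fin.last n)
    (hcard : ∀ j, (B.V (cut j)).card ≤ 2)
    (c : Fin (m + 1)) (hc : 0 < (c : ℕ)) :
    ∃ E : (Fin n → Bool) → ℝ,
      (∀ x, B.avgEval x = B.suffixEval (cut c) x + E x) ∧
      ∀ x, |E x| ≤
        ind (∀ k : Fin m, (c : ℕ) ≤ (k : ℕ) →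
          ¬ B.FColEvent (cut k.castSucc) (cut k.succ) x) := by
  classical
  refine ⟨fun x => B.avgEval x - B.suffixEval (cut c) x, fun x => by ring, fun x => ?_⟩
  show |B.avgEval x - B.suffixEval (cut c) x| ≤ _
  have han : (cut c : ℕ) ≤ n := Nat.lt_succ_iff.mp (cut c).isLt
  set a : ℕ := (cut c : ℕ) with ha
  set g : Fin 3 → ℝ := fun v => if B.accept (B.runTo x v a n) then -1 else 1 with hgdef
  have h0fin : (⟨0, Nat.succ_pos n⟩ : Fin (n + 1)) = 0 := by ext; simp
  have hafin : (⟨a, Nat.lt_succ_of_le han⟩ : Fin (n + 1)) = cut c := by ext; simp [ha]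
  have hS0 : ∀ v : Fin 3,
      (if B.accept (B.runTo x v 0 n) then (-1 : ℝ) else 1) = g (B.runTo x v 0 a) := by
    intro v
    rw [hgdef]
    simp only
    rw [B.runTo_comp' x 0 a n (Nat.zero_le _) han han v]
  have hmem0 : ∀ v ∈ B.V 0, B.runTo x v 0 a ∈ B.V (cut c) := by
    intro v hv
    have h1 : v ∈ B.V ⟨0, Nat.succ_pos n⟩ := by rw [h0fin]; exact hv
    have h2 := B.runTo_mem' x 0 a (Nat.zero_le _) han (Nat.succ_pos n) (Nat.lt_succ_of_le han) v h1
    rwa [hafin] at h2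
  have havg : B.avgEval x = (∑ v ∈ B.V 0, g (B.runTo x v 0 a)) / ((B.V 0).card : ℝ) := by
    unfold ROBP.avgEval
    rw [Finset.sum_congr rfl (fun v _ => hS0 v)]
  have hsuf : B.suffixEval (cut c) x = (∑ v ∈ B.V (cut c), g v) / ((B.V (cut c)).card : ℝ) := by
    simp only [ROBP.suffixEval, hgdef, ← ha]
  have hne0 : (B.V 0).Nonempty := B.V_nonempty 0
  have hnec : (B.V (cut c)).Nonempty := B.V_nonempty (cut c)
  by_cases H : ∀ k : Fin m, (c : ℕ) ≤ (k : ℕ) →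
      ¬ B.FColEvent (cut k.castSucc) (cut k.succ) x
  · rw [ind, if_pos H]
    obtain ⟨u₀, hu₀⟩ := hnec
    by_cases hcon : ∀ u ∈ B.V (cut c),
        B.accept (B.runTo x u a n) = B.accept (B.runTo x u₀ a n)
    · have hgcon : ∀ u ∈ B.V (cut c), g u = g u₀ := by
        intro u hu
        rw [hgdef]
        simp only
        rw [hcon u hu]
      have h2 : B.suffixEval (cut c) x = g u₀ := by
        rw [hsuf]; exact avg_const' ⟨u₀, hu₀⟩ g (g u₀) hgcon
      have h1 : B.avgEval x = g u₀ := by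
        rw [havg]
        exact avg_const' hne0 _ (g u₀) (fun v hv => hgcon _ (hmem0 v hv))
      rw [h1, h2]
      simp
    · push_neg at hcon
      obtain ⟨u₁, hu₁, hne⟩ := hcon
      have hne' : u₁ ≠ u₀ := fun h => hne (by rw [h])
      have hsub : ({u₁, u₀} : Finset (Fin 3)) ⊆ B.V (cut c) := by
        intro z hz
        rcases Finset.mem_insert.mp hz with h | h
        · rwa [h]
        · rw [Finset.mem_singleton.mp h]; exact hu₀
      have hSc : B.V (cut c) = {u₁, u₀} :=
        (Finset.eq_of_subset_of_card_le hsub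
          (le_trans (hcard c) (by rw [Finset.card_pair hne']))).symm
      have hsum : ∑ v ∈ B.V (cut c), g v = 0 := by
        rw [hSc, Finset.sum_pair hne']
        show (if B.accept (B.runTo x u₁ a n) then (-1 : ℝ) else 1)
            + (if B.accept (B.runTo x u₀ a n) then (-1 : ℝ) else 1) = 0
        cases hb0 : B.accept (B.runTo x u₀ a n) <;>
          cases hb1 : B.accept (B.runTo x u₁ a n)
        · exact absurd (hb1.trans hb0.symm) hne
        · norm_num
        · norm_num
        · exact absurd (hb1.trans hb0.symm) hne
      have h2 : B.suffixEval (cut c) x = 0 := by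
        rw [hsuf, hsum, zero_div]
      have h1 : |B.avgEval x| ≤ 1 := by
        rw [havg]
        refine avg_abs_le' hne0 _ (fun v _ => ?_)
        rw [hgdef]
        simp only
        split <;> norm_num
      rw [h2, sub_zero]
      exact h1
  · rw [ind, if_neg H]
    push_neg at H
    obtain ⟨k, hk, hF⟩ := H
    obtain ⟨t, v, ht1, ht2, -, -, hall⟩ := hF
    set a' : ℕ := (cut k.castSucc : ℕ) with ha'
    have htn : t ≤ n := le_trans ht2 (Nat.lt_succ_iff.mp (cut k.succ).isLt)
    have haa' : a ≤ a' := by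
      have hle : cut c ≤ cut k.castSucc := hmono (by rw [Fin.le_def]; simpa using hk)
      exact hle
    have ha'n : a' ≤ n := Nat.lt_succ_iff.mp (cut k.castSucc).isLt
    have ha'fin : (⟨a', Nat.lt_succ_of_le ha'n⟩ : Fin (n + 1)) = cut k.castSucc := by
      ext; exact ha'
    have key : ∀ i, (hi : i ≤ a') → ∀ u : Fin 3,
        u ∈ B.V ⟨i, Nat.lt_succ_of_le (le_trans hi ha'n)⟩ →
          B.runTo x u i n = B.runTo x v t n := by
      intro i hi u hu
      rw [← B.runTo_comp' x i a' n hi ha'n ha'n u,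
        ← B.runTo_comp' x a' t n (le_of_lt ht1) htn htn]
      have hmem := B.runTo_mem' x i a' hi ha'n (Nat.lt_succ_of_le (le_trans hi ha'n))
        (Nat.lt_succ_of_le ha'n) u hu
      rw [ha'fin] at hmem
      rw [hall _ hmem]
    set c₀ : ℝ := if B.accept (B.runTo x v t n) then (-1 : ℝ) else 1 with hc₀
    have hgc : ∀ u ∈ B.V (cut c), g u = c₀ := by
      intro u hu
      rw [hgdef, hc₀]
      simp only
      rw [key a haa' u (by rwa [hafin])]
    have h2 : B.suffixEval (cut c) x = c₀ := by
      rw [hsuf]; exact avg_const' hnec g c₀ hgc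
    have h1 : B.avgEval x = c₀ := by
      rw [havg]
      exact avg_const' hne0 _ c₀ (fun w hw => hgc _ (hmem0 w hw))
    rw [h1, h2]
    simp
end
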